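/- Converse for one energy unit: Every rate pair (R_1, R_2) that is achievable with U = 1 energy unit satisfies R_1 + R_2 ≤ 1 bit per channel use. (With a single energy unit, at every channel use exactly one node holds the unit, the other node is forced to transmit '0', and hence at most one bit of information can be conveyed per channel use in total.) -/
import Mathlib


open scoped BigOperators

namespace TwoWayEnergy

/-- Transcript of the first `i` channel uses: `(transcript f1 f2 i).1` is the list of
symbols sent by Node 1 (of length `i`), and `.2` those sent by Node 2, when Node `j`
uses the strategy `fj : List Bool → Bool` mapping its past received symbols to its
currently transmitted symbol. -/
def transcript (f1 f2 : List Bool → Bool) : ℕ → List Bool × List Bool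
  | 0 => ([], [])
  | i + 1 =>
      let p := transcript f1 f2 i
      (p.1 ++ [f1 p.2], p.2 ++ [f2 p.1])

/-- Symbol transmitted by Node 1 at channel use `i` (0-indexed); `true` = "1". -/
def X1 (f1 f2 : List Bool → Bool) (i : ℕ) : Bool := f1 (transcript f1 f2 i).2

/-- Symbol transmitted by Node 2 at channel use `i` (0-indexed); `true` = "1". -/
def X2 (f1 f2 : List Bool → Bool) (i : ℕ) : Bool := f2 (transcript f1 f2 i).1

/-- Number of energy units held by Node 1 just before channel use `i`,
starting from the initial state `u`: transmitting a "1" costs one unit and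
receiving a "1" harvests one unit. -/
def state (f1 f2 : List Bool → Bool) (u : ℤ) : ℕ → ℤ
  | 0 => u
  | i + 1 => state f1 f2 u i - (if X1 f1 f2 i then 1 else 0) + (if X2 f1 f2 i then 1 else 0)

/-- Number of messages of a rate-`R` blocklength-`n` code. -/
noncomputable def msgCount (n : ℕ) (R : ℝ) : ℕ := ⌈(2 : ℝ) ^ ((n : ℝ) * R)⌉₊

/-- An `(n, R1, R2, U)` code for the two-way noiseless binary channel with energy
exchange: encoders map (own message, initial state, past received symbols) to the
current symbol, subject to the energy constraints (a node holding no energy must send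
"0"); decoders map (received sequence, own message, initial state) to an estimate of
the other message, and must be correct for every message pair and initial state. -/
structure Code (n : ℕ) (R1 R2 : ℝ) (U : ℕ) where
  f1 : Fin (msgCount n R1) → ℕ → List Bool → Bool
  f2 : Fin (msgCount n R2) → ℕ → List Bool → Bool
  g1 : (Fin n → Bool) → Fin (msgCount n R1) → ℕ → Fin (msgCount n R2)
  g2 : (Fin n → Bool) → Fin (msgCount n R2) → ℕ → Fin (msgCount n R1)
  energy1 : ∀ m1 m2 u, u ≤ U → ∀ i < n,
    state (f1 m1 u) (f2 m2 u) (u : ℤ) i = 0 → X1 (f1 m1 u) (f2 m2 u) i = false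
  energy2 : ∀ m1 m2 u, u ≤ U → ∀ i < n,
    state (f1 m1 u) (f2 m2 u) (u : ℤ) i = (U : ℤ) → X2 (f1 m1 u) (f2 m2 u) i = false
  decode1 : ∀ m1 m2 u, u ≤ U →
    g1 (fun i : Fin n => X2 (f1 m1 u) (f2 m2 u) (i : ℕ)) m1 u = m2
  decode2 : ∀ m1 m2 u, u ≤ U →
    g2 (fun i : Fin n => X1 (f1 m1 u) (f2 m2 u) (i : ℕ)) m2 u = m1

/-- A rate pair of nonnegative reals is achievable with `U` energy units if codes
exist for all sufficiently large blocklengths. -/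
def Achievable (U : ℕ) (R1 R2 : ℝ) : Prop :=
  0 ≤ R1 ∧ 0 ≤ R2 ∧ ∃ n0 : ℕ, ∀ n : ℕ, n0 ≤ n → Nonempty (Code n R1 R2 U)

/-- The capacity region `C(U)`: closure of the set of achievable rate pairs. -/
def CapacityRegion (U : ℕ) : Set (ℝ × ℝ) :=
  closure {rs : ℝ × ℝ | Achievable U rs.1 rs.2}

/-- Binary entropy function (base-2 logarithm), with `H(0) = H(1) = 0`. -/
noncomputable def binEnt (p : ℝ) : ℝ :=
  -(p * Real.logb 2 p) - (1 - p) * Real.logb 2 (1 - p)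

lemma transcript_succ (f1 f2 : List Bool → Bool) (i : ℕ) :
    transcript f1 f2 (i + 1) =
      ((transcript f1 f2 i).1 ++ [X1 f1 f2 i], (transcript f1 f2 i).2 ++ [X2 f1 f2 i]) := rfl

lemma state_succ (f1 f2 : List Bool → Bool) (u : ℤ) (i : ℕ) :
    state f1 f2 u (i + 1) =
      state f1 f2 u i - (if X1 f1 f2 i then 1 else 0) + (if X2 f1 f2 i then 1 else 0) := rfl

lemma state01 (f1 f2 : List Bool → Bool) (n : ℕ)
    (h1 : ∀ i < n, state f1 f2 1 i = 0 → X1 f1 f2 i = false)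
    (h2 : ∀ i < n, state f1 f2 1 i = 1 → X2 f1 f2 i = false) :
    ∀ i, i ≤ n → state f1 f2 1 i = 0 ∨ state f1 f2 1 i = 1 := by
  intro i
  induction i with
  | zero => intro _; right; rfl
  | succ i ih =>
    intro hi
    have hlt : i < n := hi
    rcases ih hlt.le with hs | hs
    · rw [state_succ, hs, h1 i hlt hs]
      cases hx : X2 f1 f2 i <;> simp
    · rw [state_succ, hs, h2 i hlt hs]
      cases hx : X1 f1 f2 i <;> simp

lemma transcript_eq (A1 A2 B1 B2 : List Bool → Bool) (n : ℕ)
    (hA1 : ∀ i < n, state A1 A2 1 i = 0 → X1 A1 A2 i = false)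
    (hA2 : ∀ i < n, state A1 A2 1 i = 1 → X2 A1 A2 i = false)
    (hB1 : ∀ i < n, state B1 B2 1 i = 0 → X1 B1 B2 i = false)
    (hB2 : ∀ i < n, state B1 B2 1 i = 1 → X2 B1 B2 i = false)
    (hb : ∀ i < n, (X1 A1 A2 i || X2 A1 A2 i) = (X1 B1 B2 i || X2 B1 B2 i)) :
    ∀ i, i ≤ n →
      transcript A1 A2 i = transcript B1 B2 i ∧ state A1 A2 1 i = state B1 B2 1 i := by
  intro i
  induction i with
  | zero => intro _; exact ⟨rfl, rfl⟩
  | succ i ih =>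
    intro hi
    have hlt : i < n := hi
    obtain ⟨ht, hs⟩ := ih hlt.le
    rcases state01 A1 A2 n hA1 hA2 i hlt.le with h0 | h1
    · have hx1A := hA1 i hlt h0
      have hx1B := hB1 i hlt (hs ▸ h0)
      have hx2 : X2 A1 A2 i = X2 B1 B2 i := by
        have hbb := hb i hlt
        rw [hx1A, hx1B] at hbb
        simpa using hbb
      refine ⟨?_, ?_⟩
      · rw [transcript_succ, transcript_succ, ht, hx1A, hx1B, hx2]
      · rw [state_succ, state_succ, hs, hx1A, hx1B, hx2]
    · have hx2A := hA2 i hlt h1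
      have hx2B := hB2 i hlt (hs ▸ h1)
      have hx1 : X1 A1 A2 i = X1 B1 B2 i := by
        have hbb := hb i hlt
        rw [hx2A, hx2B] at hbb
        simpa using hbb
      refine ⟨?_, ?_⟩
      · rw [transcript_succ, transcript_succ, ht, hx2A, hx2B, hx1]
      · rw [state_succ, state_succ, hs, hx2A, hx2B, hx1]

lemma X_eq (A1 A2 B1 B2 : List Bool → Bool) (i : ℕ)
    (hi : transcript A1 A2 i = transcript B1 B2 i)
    (hsi : transcript A1 A2 (i + 1) = transcript B1 B2 (i + 1)) :
    X1 A1 A2 i = X1 B1 B2 i ∧ X2 A1 A2 i = X2 B1 B2 i := by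
  rw [transcript_succ, transcript_succ, hi, Prod.mk.injEq] at hsi
  obtain ⟨h1, h2⟩ := hsi
  simp at h1 h2
  exact ⟨h1, h2⟩

lemma transcript_cross (A1 A2 B1 B2 : List Bool → Bool) (n : ℕ)
    (h : ∀ i ≤ n, transcript A1 A2 i = transcript B1 B2 i) :
    ∀ i ≤ n, transcript A1 B2 i = transcript A1 A2 i := by
  intro i
  induction i with
  | zero => intro _; rfl
  | succ i ih =>
    intro hi
    have hle : i ≤ n := Nat.le_of_succ_le hi
    have ht := ih hle
    have hX2 : X2 B1 B2 i = X2 A1 A2 i :=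
      ((X_eq A1 A2 B1 B2 i (h i hle) (h (i + 1) hi)).2).symm
    have e1 : X1 A1 B2 i = X1 A1 A2 i := by
      show A1 (transcript A1 B2 i).2 = _
      rw [ht]; rfl
    have e2 : X2 A1 B2 i = X2 A1 A2 i := by
      show B2 (transcript A1 B2 i).1 = _
      rw [ht, h i hle]
      exact hX2
    rw [transcript_succ, transcript_succ, ht, e1, e2]


/-- **Converse for one energy unit.** Every rate pair achievable with `U = 1` energy
unit satisfies `R1 + R2 ≤ 1` bit per channel use. -/
theorem converse_one_unit (R1 R2 : ℝ) (h : Achievable 1 R1 R2) :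
    R1 + R2 ≤ 1 := by
  obtain ⟨hR1, hR2, n0, hn⟩ := h
  set n := max n0 1 with hn_def
  obtain ⟨C⟩ := hn n (le_max_left _ _)
  have hnpos : 1 ≤ n := le_max_right _ _
  have key : msgCount n R1 * msgCount n R2 ≤ 2 ^ n := by
    have hinj : Function.Injective
        (fun mm : Fin (msgCount n R1) × Fin (msgCount n R2) =>
          fun i : Fin n =>
            X1 (C.f1 mm.1 1) (C.f2 mm.2 1) i || X2 (C.f1 mm.1 1) (C.f2 mm.2 1) i) := by
      rintro ⟨m1, m2⟩ ⟨m1', m2'⟩ heq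
      set A1 := C.f1 m1 1 with hA1d
      set A2 := C.f2 m2 1 with hA2d
      set B1 := C.f1 m1' 1 with hB1d
      set B2 := C.f2 m2' 1 with hB2d
      have hA1 := C.energy1 m1 m2 1 le_rfl
      have hA2 := C.energy2 m1 m2 1 le_rfl
      have hB1 := C.energy1 m1' m2' 1 le_rfl
      have hB2 := C.energy2 m1' m2' 1 le_rfl
      simp only [Nat.cast_one] at hA1 hA2 hB1 hB2
      have hb : ∀ i < n, (X1 A1 A2 i || X2 A1 A2 i) = (X1 B1 B2 i || X2 B1 B2 i) := by
        intro i hi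
        exact congrFun heq ⟨i, hi⟩
      have hTr : ∀ i ≤ n, transcript A1 A2 i = transcript B1 B2 i := fun i hi =>
        (transcript_eq A1 A2 B1 B2 n hA1 hA2 hB1 hB2 hb i hi).1
      have hC := transcript_cross A1 A2 B1 B2 n hTr
      have hm1 : m1 = m1' := by
        have d1 := C.decode2 m1 m2' 1 le_rfl
        have d2 := C.decode2 m1' m2' 1 le_rfl
        rw [← hA1d, ← hB2d] at d1
        rw [← hB1d, ← hB2d] at d2
        have hfun : (fun i : Fin n => X1 A1 B2 (i : ℕ)) =
                    (fun i : Fin n => X1 B1 B2 (i : ℕ)) := by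
          funext i
          have hi : (i : ℕ) < n := i.isLt
          have e1 : X1 A1 B2 (i : ℕ) = X1 A1 A2 (i : ℕ) := by
            show A1 (transcript A1 B2 (i : ℕ)).2 = _
            rw [hC (i : ℕ) hi.le]; rfl
          have e2 : X1 A1 A2 (i : ℕ) = X1 B1 B2 (i : ℕ) :=
            (X_eq A1 A2 B1 B2 (i : ℕ) (hTr _ hi.le) (hTr _ hi)).1
          exact e1.trans e2
        rw [← d1, ← d2, hfun]
      have hm2 : m2 = m2' := by
        have d3 := C.decode1 m1 m2 1 le_rfl
        have d4 := C.decode1 m1 m2' 1 le_rfl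
        rw [← hA1d, ← hA2d] at d3
        rw [← hA1d, ← hB2d] at d4
        have hfun : (fun i : Fin n => X2 A1 B2 (i : ℕ)) =
                    (fun i : Fin n => X2 A1 A2 (i : ℕ)) := by
          funext i
          have hi : (i : ℕ) < n := i.isLt
          show B2 (transcript A1 B2 (i : ℕ)).1 = _
          rw [hC (i : ℕ) hi.le, hTr (i : ℕ) hi.le]
          exact ((X_eq A1 A2 B1 B2 (i : ℕ) (hTr _ hi.le) (hTr _ hi)).2).symm
        rw [← d3, ← d4, hfun]
      rw [hm1, hm2]
    calc msgCount n R1 * msgCount n R2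
        = Fintype.card (Fin (msgCount n R1) × Fin (msgCount n R2)) := by simp
      _ ≤ Fintype.card (Fin n → Bool) := Fintype.card_le_of_injective _ hinj
      _ = 2 ^ n := by simp
  have h1 : (2 : ℝ) ^ ((n : ℝ) * R1) ≤ (msgCount n R1 : ℝ) := by
    rw [msgCount]; exact Nat.le_ceil _
  have h2 : (2 : ℝ) ^ ((n : ℝ) * R2) ≤ (msgCount n R2 : ℝ) := by
    rw [msgCount]; exact Nat.le_ceil _
  have hmul : (2 : ℝ) ^ ((n : ℝ) * (R1 + R2)) ≤ (2 : ℝ) ^ (n : ℝ) := by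
    have hprod := mul_le_mul h1 h2
      (le_of_lt (Real.rpow_pos_of_pos two_pos _)) (Nat.cast_nonneg _)
    calc (2 : ℝ) ^ ((n : ℝ) * (R1 + R2))
        = (2 : ℝ) ^ ((n : ℝ) * R1) * (2 : ℝ) ^ ((n : ℝ) * R2) := by
          rw [← Real.rpow_add two_pos]; ring_nf
      _ ≤ (msgCount n R1 : ℝ) * (msgCount n R2 : ℝ) := hprod
      _ ≤ (2 : ℝ) ^ (n : ℝ) := by
          rw [← Nat.cast_mul]
          calc ((msgCount n R1 * msgCount n R2 : ℕ) : ℝ) ≤ ((2 ^ n : ℕ) : ℝ) := by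
                exact_mod_cast key
            _ = (2 : ℝ) ^ (n : ℝ) := by
                rw [Nat.cast_pow, ← Real.rpow_natCast]; norm_num
  have hle : (n : ℝ) * (R1 + R2) ≤ (n : ℝ) :=
    (Real.rpow_le_rpow_left_iff (by norm_num : (1 : ℝ) < 2)).mp hmul
  have hnpos' : (0 : ℝ) < n := by exact_mod_cast lt_of_lt_of_le Nat.zero_lt_one hnpos
  nlinarith



end TwoWayEnergy
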